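/- Let M N : ℕ be positive, A : Matrix (Fin M) (Fin M) ℝ, B : Matrix (Fin N) (Fin N) ℝ, φ* : Fin M → ℝ, ψ* : Fin N → ℝ, and define θ* : Fin M × Fin N → ℝ by θ* (l, i) = φ* l + ψ* i. Then the Kuramoto Jacobian of the multiplex coupling matrix at the composed state is the Kronecker sum of the layer Jacobians: J_{A ⊞ B}(θ*) = (J_A(φ*)) ⊞ (J_B(ψ*)). -/

import Mathlib

/-- The Kronecker sum `A ⊞ B = A ⊗ I_N + I_M ⊗ B` of two square matrices. -/
def kronSum {M N : ℕ} (A : Matrix (Fin M) (Fin M) ℝ) (B : Matrix (Fin N) (Fin N) ℝ) :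
    Matrix (Fin M × Fin N) (Fin M × Fin N) ℝ :=
  fun p q => (if p.2 = q.2 then A p.1 q.1 else 0) + (if p.1 = q.1 then B p.2 q.2 else 0)

/-- The Kuramoto Jacobian of the coupling matrix `C` at the state `θ`. -/
noncomputable def kuraJac {ι : Type*} [Fintype ι] [DecidableEq ι]
    (C : Matrix ι ι ℝ) (θ : ι → ℝ) : Matrix ι ι ℝ :=
  fun i j =>
    if i = j then -∑ k ∈ Finset.univ \ {i}, C i k * Real.cos (θ k - θ i)
    else C i j * Real.cos (θ j - θ i)

theorem kuraJac_kronSum_composed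
    (M N : ℕ) (hM : 0 < M) (hN : 0 < N)
    (A : Matrix (Fin M) (Fin M) ℝ) (B : Matrix (Fin N) (Fin N) ℝ)
    (φ : Fin M → ℝ) (ψ : Fin N → ℝ)
    (θ : Fin M × Fin N → ℝ) (hθ : ∀ (l : Fin M) (i : Fin N), θ (l, i) = φ l + ψ i) :
    kuraJac (kronSum A B) θ = kronSum (kuraJac A φ) (kuraJac B ψ) := by
  have hcos : ∀ (k l : Fin M) (j i : Fin N),
      Real.cos (θ (k, j) - θ (l, i)) = Real.cos ((φ k - φ l) + (ψ j - ψ i)) := by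
    intro k l j i; rw [hθ, hθ]; ring_nf
  funext p q
  obtain ⟨l, i⟩ := p
  obtain ⟨k, j⟩ := q
  simp only [kuraJac, kronSum]
  by_cases hp : ((l, i) : Fin M × Fin N) = (k, j)
  · cases hp
    simp only [if_pos rfl, Prod.mk.injEq]
    rw [Finset.sdiff_singleton_eq_erase, Finset.sum_erase_eq_sub (Finset.mem_univ _),
      Finset.sdiff_singleton_eq_erase, Finset.sum_erase_eq_sub (Finset.mem_univ _),
      Finset.sdiff_singleton_eq_erase, Finset.sum_erase_eq_sub (Finset.mem_univ _)]
    have h1 : ∑ p : Fin M × Fin N,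
        ((if i = p.2 then A l p.1 else 0) + (if l = p.1 then B i p.2 else 0)) *
          Real.cos (θ p - θ (l, i))
        = (∑ k', A l k' * Real.cos (φ k' - φ l)) +
          (∑ j', B i j' * Real.cos (ψ j' - ψ i)) := by
      rw [Fintype.sum_prod_type]
      simp only [add_mul, Finset.sum_add_distrib, ite_mul, zero_mul, hcos]
      simp [Finset.sum_ite_eq, Finset.sum_comm]
    rw [h1]
    simp [hcos, sub_self]
    ring
  · rw [if_neg hp]
    by_cases hji : j = i
    · subst hji
      have hkl : k ≠ l := by rintro rfl; exact hp rfl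
      simp [hkl, Ne.symm hkl, hcos]
    · by_cases hkl : k = l
      · subst hkl
        simp [hji, Ne.symm hji, hcos]
      · simp [hji, hkl, Ne.symm hji, Ne.symm hkl]
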